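/- There exists exactly one formal power series f = Σ_{n≥0} κ_n q^n with real coefficients satisfying q·f² = (q² + q − 1)·f + 1 in ℝ⟦q⟧; it has κ_0 = 1, and its coefficients satisfy limsup_{n→∞} |κ_n|^{1/n} = (3+√5)/2, i.e. the radius of convergence of f equals R_* = (3−√5)/2. -/

import Mathlib

open PowerSeries Filter Finset

noncomputable def kap : ℕ → ℝ
  | 0 => 1
  | n + 1 =>
    (if n = 0 then 0 else kap (n - 1)) + kap n
      - ∑ i ∈ (Finset.range (n + 1)).attach, kap i.1 * kap (n - i.1)
  decreasing_by
  · omega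
  · omega
  · have := i.2; simp only [Finset.mem_range] at this; omega
  · omega

def Sol (f : PowerSeries ℝ) : Prop :=
  PowerSeries.X * f ^ 2 = (PowerSeries.X ^ 2 + PowerSeries.X - 1) * f + 1

lemma lhs_coeff0 (f : PowerSeries ℝ) : coeff 0 (X * f ^ 2) = 0 := by
  simp

lemma rhs_coeff0 (f : PowerSeries ℝ) :
    coeff 0 ((X ^ 2 + X - 1) * f + 1) = 1 - coeff 0 f := by
  simp [PowerSeries.coeff_zero_eq_constantCoeff, map_mul]
  ring

lemma lhs_coeffS (f : PowerSeries ℝ) (n : ℕ) :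
    coeff (n + 1) (X * f ^ 2) = ∑ i ∈ range (n + 1), coeff i f * coeff (n - i) f := by
  rw [coeff_succ_X_mul, sq, PowerSeries.coeff_mul,
    Finset.Nat.sum_antidiagonal_eq_sum_range_succ_mk]

lemma rhs_coeffS (f : PowerSeries ℝ) (n : ℕ) :
    coeff (n + 1) ((X ^ 2 + X - 1) * f + 1) =
      (if n = 0 then 0 else coeff (n - 1) f) + coeff n f - coeff (n + 1) f := by
  have h2 : (X ^ 2 : PowerSeries ℝ) * f = X * (X * f) := by ring
  rw [sub_mul, add_mul, one_mul, map_add, map_sub, map_add, h2, coeff_succ_X_mul,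
    coeff_succ_X_mul]
  rcases n with _ | m
  · simp
  · rw [coeff_succ_X_mul]
    simp only [Nat.succ_ne_zero, if_false, Nat.add_sub_cancel]
    have : coeff (m + 1 + 1) (1 : PowerSeries ℝ) = 0 := by
      simp [PowerSeries.coeff_one]
    rw [this]
    ring

lemma sol_iff (f : PowerSeries ℝ) :
    Sol f ↔ (coeff 0 f = 1 ∧ ∀ n : ℕ,
      coeff (n + 1) f = (if n = 0 then 0 else coeff (n - 1) f) + coeff n f
        - ∑ i ∈ range (n + 1), coeff i f * coeff (n - i) f) := by
  constructor
  · intro h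
    have hc : ∀ n, coeff n (X * f ^ 2) = coeff n ((X ^ 2 + X - 1) * f + 1) := by
      intro n; rw [h]
    constructor
    · have := hc 0; rw [lhs_coeff0, rhs_coeff0] at this; linarith
    · intro n
      have := hc (n + 1); rw [lhs_coeffS, rhs_coeffS] at this; linarith
  · rintro ⟨h0, hS⟩
    apply PowerSeries.ext
    intro n
    rcases n with _ | m
    · rw [lhs_coeff0, rhs_coeff0, h0]; ring
    · rw [lhs_coeffS, rhs_coeffS, hS m]; ring

lemma sol_unique {f g : PowerSeries ℝ} (hf : Sol f) (hg : Sol g) : f = g := by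
  rw [sol_iff] at hf hg
  apply PowerSeries.ext
  intro n
  induction n using Nat.strong_induction_on with
  | _ n ih =>
    rcases n with _ | m
    · rw [hf.1, hg.1]
    · rw [hf.2 m, hg.2 m]
      have hm : ∀ k, k ≤ m → coeff k f = coeff k g := fun k hk => ih k (by omega)
      rcases m with _ | l
      · simp [hm 0 le_rfl]
      · simp only [Nat.succ_ne_zero, if_false, Nat.add_sub_cancel]
        rw [hm l (by omega), hm (l + 1) le_rfl]
        congr 1
        apply Finset.sum_congr rfl
        intro i hi
        have hi' : i ≤ l + 1 := by simpa [Nat.lt_succ_iff] using Finset.mem_range.mp hi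
        rw [hm i hi', hm (l + 1 - i) (by omega)]

noncomputable def Phi : PowerSeries ℝ := PowerSeries.mk kap

lemma coeff_Phi (n : ℕ) : coeff n Phi = kap n := PowerSeries.coeff_mk n kap

lemma sol_Phi : Sol Phi := by
  rw [sol_iff]
  constructor
  · rw [coeff_Phi, kap]
  · intro n
    simp only [coeff_Phi]
    rw [show kap (n + 1) = (if n = 0 then 0 else kap (n - 1)) + kap n
      - ∑ i ∈ (Finset.range (n + 1)).attach, kap i.1 * kap (n - i.1) from by rw [kap]]
    rw [Finset.sum_attach (range (n + 1)) (fun i => kap i * kap (n - i))]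

lemma catalan_le_pow (n : ℕ) : catalan n ≤ 2 ^ (2 * n + 1) := by
  have h1 : catalan n ≤ n.centralBinom := by
    rw [catalan_eq_centralBinom_div]; exact Nat.div_le_self _ _
  have h2 : n.centralBinom ≤ 2 ^ (2 * n) := by
    have : n.centralBinom = (2 * n).choose n := rfl
    rw [this, ← Nat.sum_range_choose (2 * n)]
    exact Finset.single_le_sum (fun i _ => Nat.zero_le _)
      (Finset.mem_range.mpr (by omega))
  calc catalan n ≤ 2 ^ (2 * n) := h1.trans h2
    _ ≤ 2 ^ (2 * n + 1) := Nat.pow_le_pow_right (by norm_num) (by omega)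

noncomputable def bb (γ : ℂ) : ℕ → ℂ
  | 0 => 1
  | n + 1 => -((catalan n : ℂ) / 2 ^ (2 * n + 1)) * γ ^ (n + 1)

noncomputable def Bs (γ : ℂ) : PowerSeries ℂ := PowerSeries.mk (bb γ)

lemma bb_succ (γ : ℂ) (n : ℕ) :
    bb γ (n + 1) = -((catalan n : ℂ) / 2 ^ (2 * n + 1)) * γ ^ (n + 1) := rfl

lemma bb_norm (γ : ℂ) (n : ℕ) : ‖bb γ n‖ ≤ ‖γ‖ ^ n := by
  rcases n with _ | n
  · simp [bb]
  · rw [bb]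
    have hc : ((catalan n : ℂ) / 2 ^ (2 * n + 1)) =
        (((catalan n : ℝ) / 2 ^ (2 * n + 1) : ℝ) : ℂ) := by push_cast; ring
    rw [norm_mul, norm_neg, hc, Complex.norm_real, norm_pow, Real.norm_eq_abs]
    have h1 : |((catalan n : ℝ) / 2 ^ (2 * n + 1))| ≤ 1 := by
      rw [abs_of_nonneg (by positivity), div_le_one (by positivity)]
      exact_mod_cast catalan_le_pow n
    nlinarith [pow_nonneg (norm_nonneg γ) (n + 1)]

lemma Bs_sq (γ : ℂ) : (Bs γ) ^ 2 = 1 - PowerSeries.C γ * X := by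
  apply PowerSeries.ext
  intro n
  have hL : coeff n ((Bs γ) ^ 2) = ∑ i ∈ range (n + 1), bb γ i * bb γ (n - i) := by
    rw [sq, PowerSeries.coeff_mul, Finset.Nat.sum_antidiagonal_eq_sum_range_succ_mk]
    simp [Bs]
  rw [hL]
  rcases n with _ | _ | m
  · simp [bb]
  · rw [map_sub, PowerSeries.coeff_one, PowerSeries.coeff_C_mul, PowerSeries.coeff_X]
    simp [Finset.sum_range_succ, bb]
    ring
  · simp only [show m + 1 + 1 = m + 2 from rfl]
    have hR : coeff (m + 2) (1 - PowerSeries.C γ * X) = 0 := by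
      rw [map_sub, PowerSeries.coeff_one, PowerSeries.coeff_C_mul, PowerSeries.coeff_X]
      simp
    rw [hR]
    rw [Finset.sum_range_succ, Finset.sum_range_succ']
    simp only [Nat.sub_self, Nat.sub_zero, Nat.add_sub_cancel]
    have hmid : ∀ i ∈ range (m + 1), bb γ (i + 1) * bb γ (m + 2 - (i + 1)) =
        ((catalan i : ℂ) * (catalan (m - i) : ℂ)) * (γ ^ (m + 2) / 2 ^ (2 * m + 2)) := by
      intro i hi
      have him : i ≤ m := by simpa [Nat.lt_succ_iff] using Finset.mem_range.mp hi
      rw [show m + 2 - (i + 1) = (m - i) + 1 from by omega, bb_succ, bb_succ]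
      have e1 : (i + 1) + ((m - i) + 1) = m + 2 := by omega
      have e2 : (2 * i + 1) + (2 * (m - i) + 1) = 2 * m + 2 := by omega
      have key : γ ^ (i + 1) * γ ^ ((m - i) + 1) = γ ^ (m + 2) := by rw [← pow_add, e1]
      have key2 : ((2:ℂ) ^ (2 * i + 1)) * 2 ^ (2 * (m - i) + 1) = 2 ^ (2 * m + 2) := by
        rw [← pow_add, e2]
      rw [← key, ← key2]
      have h2 : ((2:ℂ) ^ (2 * i + 1)) ≠ 0 := pow_ne_zero _ (by norm_num)
      have h3 : ((2:ℂ) ^ (2 * (m - i) + 1)) ≠ 0 := pow_ne_zero _ (by norm_num)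
      field_simp
    rw [Finset.sum_congr rfl hmid, ← Finset.sum_mul]
    have hcat : ∑ i ∈ range (m + 1), ((catalan i : ℂ) * (catalan (m - i) : ℂ))
        = (catalan (m + 1) : ℂ) := by
      rw [catalan_succ', Finset.Nat.sum_antidiagonal_eq_sum_range_succ_mk]
      push_cast
      rfl
    have hb0 : bb γ 0 = 1 := rfl
    have hb2 : bb γ (m + 2) = -((catalan (m + 1) : ℂ) / 2 ^ (2 * (m + 1) + 1)) * γ ^ (m + 2) :=
      bb_succ γ (m + 1)
    have hp : ((2:ℂ)) ^ (2 * (m + 1) + 1) = 2 * 2 ^ (2 * m + 2) := by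
      rw [show 2 * (m + 1) + 1 = (2 * m + 2) + 1 from by omega, pow_succ]; ring
    rw [hcat, hb0, hb2, hp]
    have h4 : ((2:ℂ) ^ (2 * m + 2)) ≠ 0 := pow_ne_zero _ (by norm_num)
    field_simp
    ring

noncomputable def s5 : ℝ := Real.sqrt 5

lemma s5_sq : s5 ^ 2 = 5 := Real.sq_sqrt (by norm_num)
lemma s5_gt : 2 < s5 := by
  have : (2:ℝ) = Real.sqrt 4 := by
    rw [show (4:ℝ) = 2 ^ 2 by norm_num, Real.sqrt_sq (by norm_num)]
  rw [this]; exact Real.sqrt_lt_sqrt (by norm_num) (by norm_num)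
lemma s5_lt : s5 < 3 := by
  have : (3:ℝ) = Real.sqrt 9 := by
    rw [show (9:ℝ) = 3 ^ 2 by norm_num, Real.sqrt_sq (by norm_num)]
  rw [this]; exact Real.sqrt_lt_sqrt (by norm_num) (by norm_num)

noncomputable def Agr : ℝ := (3 + s5) / 2
noncomputable def Rs : ℝ := (3 - s5) / 2

lemma Agr_gt : 5/2 < Agr := by unfold Agr; nlinarith [s5_gt]
lemma Agr_ge1 : 1 ≤ Agr := by nlinarith [Agr_gt]
lemma Rs_pos : 0 < Rs := by unfold Rs; nlinarith [s5_lt]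
lemma Rs_Agr : Rs * Agr = 1 := by unfold Rs Agr; nlinarith [s5_sq]
lemma Rs_add_Agr : Rs + Agr = 3 := by unfold Rs Agr; ring

noncomputable def aC : ℂ := ((-(3 + s5) / 2 : ℝ) : ℂ)
noncomputable def bC : ℂ := ((-(3 - s5) / 2 : ℝ) : ℂ)
noncomputable def cC : ℂ := (1 / 2 : ℂ) + ((Real.sqrt 3 / 2 : ℝ) : ℂ) * Complex.I
noncomputable def cC' : ℂ := (1 / 2 : ℂ) - ((Real.sqrt 3 / 2 : ℝ) : ℂ) * Complex.I

lemma sqrt3_sq : (((Real.sqrt 3 : ℝ)) : ℂ) ^ 2 = 3 := by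
  rw [← Complex.ofReal_pow, Real.sq_sqrt (by norm_num : (0:ℝ) ≤ 3)]
  norm_num

lemma hab_mul : aC * bC = 1 := by
  unfold aC bC
  rw [← Complex.ofReal_mul]
  have : (-(3 + s5) / 2 : ℝ) * (-(3 - s5) / 2) = 1 := by nlinarith [s5_sq]
  rw [this, Complex.ofReal_one]

lemma hab_sum : aC + bC = -3 := by
  unfold aC bC; push_cast; ring

lemma hc_mul : cC * cC' = 1 := by
  unfold cC cC'
  push_cast
  linear_combination (-(Complex.I ^ 2) / 4) * sqrt3_sq + (-(3:ℂ) / 4) * Complex.I_sq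

lemma hc_sum : cC + cC' = 1 := by
  unfold cC cC'; ring

lemma norm_aC : ‖aC‖ = Agr := by
  unfold aC Agr
  rw [Complex.norm_real, Real.norm_eq_abs, abs_of_nonpos (by nlinarith [s5_gt])]
  ring

lemma norm_bC : ‖bC‖ ≤ Agr := by
  unfold bC
  rw [Complex.norm_real, Real.norm_eq_abs, abs_of_nonpos (by nlinarith [s5_lt])]
  unfold Agr; nlinarith [s5_gt]

lemma norm_sq_one_of (z : ℂ) (h : Complex.normSq z = 1) : ‖z‖ = 1 := by
  have h2 : ‖z‖ ^ 2 = 1 := by rw [Complex.sq_norm, h]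
  nlinarith [norm_nonneg z]

lemma normSq_cC : Complex.normSq cC = 1 := by
  unfold cC
  rw [Complex.normSq_apply]
  simp [Complex.add_re, Complex.add_im, Complex.mul_re, Complex.mul_im,
    Complex.I_re, Complex.I_im, Complex.ofReal_re, Complex.ofReal_im]
  have h3 : Real.sqrt 3 ^ 2 = 3 := Real.sq_sqrt (by norm_num)
  nlinarith [h3]

lemma normSq_cC' : Complex.normSq cC' = 1 := by
  unfold cC'
  rw [Complex.normSq_apply]
  simp [Complex.sub_re, Complex.sub_im, Complex.mul_re, Complex.mul_im,
    Complex.I_re, Complex.I_im, Complex.ofReal_re, Complex.ofReal_im]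
  have h3 : Real.sqrt 3 ^ 2 = 3 := Real.sq_sqrt (by norm_num)
  nlinarith [h3]

lemma norm_cC : ‖cC‖ ≤ Agr := by
  rw [norm_sq_one_of cC normSq_cC]; exact Agr_ge1

lemma norm_cC' : ‖cC'‖ ≤ Agr := by
  rw [norm_sq_one_of cC' normSq_cC']; exact Agr_ge1

lemma coeff_Bs_le (γ : ℂ) (hγ : ‖γ‖ ≤ Agr) (n : ℕ) : ‖coeff n (Bs γ)‖ ≤ Agr ^ n := by
  rw [show coeff n (Bs γ) = bb γ n from PowerSeries.coeff_mk n _]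
  exact (bb_norm γ n).trans (pow_le_pow_left₀ (norm_nonneg _) hγ n)

lemma mul_step (F : PowerSeries ℂ) (k : ℕ)
    (hF : ∀ n, ‖coeff n F‖ ≤ ((n:ℝ) + 1) ^ k * Agr ^ n)
    (γ : ℂ) (hγ : ‖γ‖ ≤ Agr) (n : ℕ) :
    ‖coeff n (F * Bs γ)‖ ≤ ((n:ℝ) + 1) ^ (k + 1) * Agr ^ n := by
  rw [PowerSeries.coeff_mul]
  refine (norm_sum_le _ _).trans ?_
  have hterm : ∀ p ∈ antidiagonal n,
      ‖coeff p.1 F * coeff p.2 (Bs γ)‖ ≤ ((n:ℝ) + 1) ^ k * Agr ^ n := by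
    intro p hp
    have hpn : p.1 + p.2 = n := Finset.HasAntidiagonal.mem_antidiagonal.mp hp
    rw [norm_mul]
    have h1 : ‖coeff p.1 F‖ ≤ ((n:ℝ) + 1) ^ k * Agr ^ p.1 := by
      refine (hF p.1).trans ?_
      have hpk : ((p.1:ℝ) + 1) ^ k ≤ ((n:ℝ) + 1) ^ k := by
        apply pow_le_pow_left₀ (by positivity)
        have hple : p.1 ≤ n := by omega
        have : (p.1 : ℝ) ≤ (n : ℝ) := by exact_mod_cast hple
        linarith
      have hAp : (0:ℝ) ≤ Agr ^ p.1 := pow_nonneg (by linarith [Agr_ge1]) p.1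
      nlinarith [pow_nonneg (by positivity : (0:ℝ) ≤ ((p.1:ℝ) + 1)) k]
    have h2 : ‖coeff p.2 (Bs γ)‖ ≤ Agr ^ p.2 := coeff_Bs_le γ hγ p.2
    calc ‖coeff p.1 F‖ * ‖coeff p.2 (Bs γ)‖
        ≤ (((n:ℝ) + 1) ^ k * Agr ^ p.1) * Agr ^ p.2 := by
          exact mul_le_mul h1 h2 (norm_nonneg _)
            (mul_nonneg (by positivity) (pow_nonneg (by linarith [Agr_ge1]) _))
      _ = ((n:ℝ) + 1) ^ k * Agr ^ n := by rw [mul_assoc, ← pow_add, hpn]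
  calc ∑ p ∈ antidiagonal n, ‖coeff p.1 F * coeff p.2 (Bs γ)‖
      ≤ ∑ _p ∈ antidiagonal n, ((n:ℝ) + 1) ^ k * Agr ^ n := Finset.sum_le_sum hterm
    _ = ((n:ℝ) + 1) ^ (k + 1) * Agr ^ n := by
        rw [Finset.sum_const, Finset.Nat.card_antidiagonal]
        push_cast
        ring

noncomputable def Hprod : PowerSeries ℂ := Bs aC * Bs bC * Bs cC * Bs cC'

lemma coeff_Hprod_le (n : ℕ) : ‖coeff n Hprod‖ ≤ ((n:ℝ) + 1) ^ 3 * Agr ^ n := by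
  have h0 : ∀ n, ‖coeff n (Bs aC)‖ ≤ ((n:ℝ) + 1) ^ 0 * Agr ^ n := by
    intro n; rw [pow_zero, one_mul]; exact coeff_Bs_le aC (le_of_eq norm_aC) n
  have h1 := mul_step (Bs aC) 0 h0 bC norm_bC
  have h2 := mul_step (Bs aC * Bs bC) 1 h1 cC norm_cC
  have h3 := mul_step (Bs aC * Bs bC * Bs cC) 2 h2 cC' norm_cC'
  exact h3 n

lemma Hprod_sq : Hprod ^ 2 = 1 + 2 * X - X ^ 2 + 2 * X ^ 3 + X ^ 4 := by
  have e1 : Hprod ^ 2 = (Bs aC ^ 2 * Bs bC ^ 2) * (Bs cC ^ 2 * Bs cC' ^ 2) := by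
    unfold Hprod; ring
  rw [e1, Bs_sq, Bs_sq, Bs_sq, Bs_sq]
  have m1 : PowerSeries.C aC * PowerSeries.C bC = 1 := by
    rw [← map_mul, hab_mul, map_one]
  have m2 : PowerSeries.C aC + PowerSeries.C bC = -3 := by
    rw [← map_add, hab_sum, map_neg, map_ofNat]
  have m3 : PowerSeries.C cC * PowerSeries.C cC' = 1 := by
    rw [← map_mul, hc_mul, map_one]
  have m4 : PowerSeries.C cC + PowerSeries.C cC' = 1 := by
    rw [← map_add, hc_sum, map_one]
  have q1 : (1 - PowerSeries.C aC * X) * (1 - PowerSeries.C bC * X)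
      = 1 + 3 * X + X ^ 2 := by
    linear_combination (X : PowerSeries ℂ) ^ 2 * m1 - X * m2
  have q2 : (1 - PowerSeries.C cC * X) * (1 - PowerSeries.C cC' * X)
      = 1 - X + X ^ 2 := by
    linear_combination (X : PowerSeries ℂ) ^ 2 * m3 - X * m4
  rw [q1, q2]
  ring

noncomputable def hh : PowerSeries ℝ := 2 * (X * Phi) + 1 - X - X ^ 2

lemma hh_sq : hh ^ 2 = 1 + 2 * X - X ^ 2 + 2 * X ^ 3 + X ^ 4 := by
  have e := sol_Phi
  unfold Sol at e
  unfold hh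
  linear_combination (4 * (X : PowerSeries ℝ)) * e

noncomputable def hhC : PowerSeries ℂ := PowerSeries.map (algebraMap ℝ ℂ) hh

lemma hhC_sq : hhC ^ 2 = 1 + 2 * X - X ^ 2 + 2 * X ^ 3 + X ^ 4 := by
  unfold hhC
  rw [← map_pow, hh_sq]
  simp only [map_add, map_sub, map_mul, map_pow, map_one, map_ofNat, PowerSeries.map_X]

lemma hhC_eq_Hprod : hhC = Hprod := by
  have hdiff : (hhC - Hprod) * (hhC + Hprod) = 0 := by
    linear_combination hhC_sq - Hprod_sq
  rcases mul_eq_zero.mp hdiff with h1 | h2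
  · exact sub_eq_zero.mp h1
  · exfalso
    have hc1 : constantCoeff hhC = 1 := by
      have : constantCoeff hhC = algebraMap ℝ ℂ ((constantCoeff) hh) := by
        unfold hhC
        rw [← PowerSeries.coeff_zero_eq_constantCoeff_apply, PowerSeries.coeff_map]
        simp
      rw [this]
      have h2 : constantCoeff hh = 1 := by
        unfold hh
        simp [map_add, map_sub, map_mul, PowerSeries.constantCoeff_X]
      rw [h2, map_one]
    have hc2 : constantCoeff Hprod = 1 := by
      unfold Hprod Bs
      simp [map_mul, PowerSeries.constantCoeff_mk]
      norm_num [bb]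
    have := congrArg (constantCoeff) h2
    rw [map_add, hc1, hc2, map_zero] at this
    norm_num at this

lemma coeff_hh_abs (n : ℕ) : |coeff n hh| ≤ ((n:ℝ) + 1) ^ 3 * Agr ^ n := by
  have h1 : coeff n hhC = ((coeff n hh : ℝ) : ℂ) := by
    unfold hhC
    rw [PowerSeries.coeff_map]
    rfl
  have h2 : |coeff n hh| = ‖coeff n hhC‖ := by
    rw [h1, Complex.norm_real, Real.norm_eq_abs]
  rw [h2, hhC_eq_Hprod]
  exact coeff_Hprod_le n

lemma coeff_XPhi (n : ℕ) : coeff n (X * Phi) = if n = 0 then 0 else kap (n - 1) := by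
  rcases n with _ | m
  · simp
  · rw [coeff_succ_X_mul, coeff_Phi]
    simp

lemma coeff_hh (n : ℕ) : coeff n hh =
    2 * (if n = 0 then 0 else kap (n - 1)) + (if n = 0 then 1 else 0)
      - (if n = 1 then 1 else 0) - (if n = 2 then 1 else 0) := by
  unfold hh
  have h2 : (2 : PowerSeries ℝ) * (X * Phi) = PowerSeries.C 2 * (X * Phi) := by
    rw [map_ofNat]
  rw [map_sub, map_sub, map_add, h2, PowerSeries.coeff_C_mul, coeff_XPhi,
    PowerSeries.coeff_one, PowerSeries.coeff_X, PowerSeries.coeff_X_pow]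

lemma kap_zero : kap 0 = 1 := by rw [kap]

lemma kap_one : kap 1 = 0 := by
  rw [kap]
  rw [Finset.sum_attach (range 1) (fun i => kap i * kap (0 - i))]
  simp [kap_zero]

lemma kap_bound (n : ℕ) : |kap n| ≤ ((n:ℝ) + 2) ^ 3 * Agr ^ (n + 1) := by
  have hA0 : (0:ℝ) < Agr := by linarith [Agr_ge1]
  rcases n with _ | _ | m
  · rw [kap_zero, abs_one]
    norm_num
    nlinarith [Agr_ge1]
  · rw [kap_one]
    simp only [abs_zero, Nat.cast_one]
    positivity
  · have hco := coeff_hh (m + 3)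
    simp only [Nat.succ_ne_zero, if_false, show m + 3 ≠ 1 by omega, show m + 3 ≠ 2 by omega,
      Nat.add_sub_cancel] at hco
    have hco2 : coeff (m + 3) hh = 2 * kap (m + 2) := by
      rw [hco]; norm_num [show ¬(m + 3 = 1) by omega, show ¬(m + 3 = 2) by omega]
    have hb := coeff_hh_abs (m + 3)
    rw [hco2, abs_mul] at hb
    have : |kap (m + 2)| ≤ (((m:ℝ) + 3) + 1) ^ 3 * Agr ^ (m + 3) / 2 := by
      rw [abs_two] at hb
      push_cast at hb ⊢
      linarith
    refine this.trans ?_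
    push_cast
    have h1 : (0:ℝ) ≤ ((m:ℝ) + 3 + 1) ^ 3 * Agr ^ (m + 3) := by positivity
    nlinarith [h1]

lemma upper_ev (B : ℝ) (hB : Agr < B) :
    ∀ᶠ n : ℕ in atTop, |kap n| ^ ((n:ℝ)⁻¹) ≤ B := by
  have hA0 : (0:ℝ) < Agr := by linarith [Agr_ge1]
  have hB0 : (0:ℝ) < B := by linarith
  have hr : 1 < B / Agr := (one_lt_div hA0).mpr hB
  have t0 := tendsto_pow_const_div_const_pow_of_one_lt 3 hr
  have h27 : (0:ℝ) < 1 / (27 * Agr) := by positivity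
  have hev1 := t0.eventually_lt_const h27
  filter_upwards [hev1, eventually_ge_atTop 1] with n hn h1n
  have hq0 : (0:ℝ) < (B / Agr) ^ n := pow_pos (by linarith) n
  have hn3 : (n:ℝ) ^ 3 < 1 / (27 * Agr) * (B / Agr) ^ n := by
    rw [div_lt_iff₀ hq0] at hn
    linarith
  have key : 27 * Agr * (n:ℝ) ^ 3 < (B / Agr) ^ n := by
    have h27A : (0:ℝ) < 27 * Agr := by positivity
    have := mul_lt_mul_of_pos_left hn3 h27A
    have hcan : 27 * Agr * (1 / (27 * Agr) * (B / Agr) ^ n) = (B / Agr) ^ n := by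
      field_simp
    linarith [hcan ▸ this]
  have hkap : |kap n| ≤ B ^ n := by
    have h1 := kap_bound n
    have h2 : ((n:ℝ) + 2) ^ 3 ≤ 27 * (n:ℝ) ^ 3 := by
      have hn1 : (1:ℝ) ≤ (n:ℝ) := by exact_mod_cast h1n
      have : ((n:ℝ) + 2) ≤ 3 * (n:ℝ) := by linarith
      calc ((n:ℝ) + 2) ^ 3 ≤ (3 * (n:ℝ)) ^ 3 := by
            apply pow_le_pow_left₀ (by linarith) this
        _ = 27 * (n:ℝ) ^ 3 := by ring
    have hAgrn : (0:ℝ) < Agr ^ n := pow_pos hA0 n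
    have step1 : |kap n| ≤ 27 * (n:ℝ) ^ 3 * Agr ^ (n + 1) := by
      refine h1.trans ?_
      have : (0:ℝ) ≤ Agr ^ (n + 1) := by positivity
      nlinarith
    have step2 : 27 * (n:ℝ) ^ 3 * Agr ^ (n + 1) ≤ (B / Agr) ^ n * Agr ^ n := by
      rw [pow_succ]
      calc 27 * (n:ℝ) ^ 3 * (Agr ^ n * Agr) = (27 * Agr * (n:ℝ) ^ 3) * Agr ^ n := by ring
        _ ≤ (B / Agr) ^ n * Agr ^ n := by nlinarith [key, hAgrn]
    have step3 : (B / Agr) ^ n * Agr ^ n = B ^ n := by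
      rw [div_pow, div_mul_cancel₀]
      positivity
    linarith
  have hBn : (B ^ n : ℝ) ^ ((n:ℝ)⁻¹) = B := by
    rw [← Real.rpow_natCast B n, ← Real.rpow_mul (le_of_lt hB0),
      mul_inv_cancel₀ (Nat.cast_ne_zero.mpr (by omega) : ((n:ℝ) ≠ 0)), Real.rpow_one]
  rw [← hBn]
  exact Real.rpow_le_rpow (abs_nonneg _) hkap (by positivity)

lemma Rs_lt1 : Rs < 1 := by nlinarith [Rs_Agr, Agr_gt, Rs_pos]

set_option maxHeartbeats 1000000 in
lemma lower_freq (B : ℝ) (hB1 : 1 < B) (hBA : B < Agr) :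
    ∃ᶠ n : ℕ in atTop, B ≤ |kap n| ^ ((n:ℝ)⁻¹) := by
  by_contra hcon
  rw [Filter.not_frequently] at hcon
  have hev : ∀ᶠ n : ℕ in atTop, |kap n| ^ ((n:ℝ)⁻¹) < B :=
    hcon.mono fun n h => not_le.mp h
  obtain ⟨N, hN⟩ := eventually_atTop.mp hev
  have hB0 : (0:ℝ) < B := by linarith
  have hkapBn : ∀ n, N ≤ n → 1 ≤ n → |kap n| ≤ B ^ n := by
    intro n hNn h1n
    have h := le_of_lt (hN n hNn)
    have h0 : (0:ℝ) ≤ |kap n| ^ ((n:ℝ)⁻¹) := Real.rpow_nonneg (abs_nonneg _) _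
    have hp := pow_le_pow_left₀ h0 h n
    rwa [Real.rpow_inv_natCast_pow (abs_nonneg _) (by omega)] at hp
  set C : ℝ := 1 + ∑ i ∈ range (N + 1), |kap i| / B ^ i with hCdef
  have hSnn : (0:ℝ) ≤ ∑ i ∈ range (N + 1), |kap i| / B ^ i := by positivity
  have hC1 : 1 ≤ C := by rw [hCdef]; linarith
  have hCb : ∀ n, |kap n| ≤ C * B ^ n := by
    intro n
    by_cases hc : N ≤ n ∧ 1 ≤ n
    · exact (hkapBn n hc.1 hc.2).trans (le_mul_of_one_le_left (by positivity) hC1)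
    · have hmem : n ∈ range (N + 1) := mem_range.mpr (by omega)
      have h1 : |kap n| / B ^ n ≤ ∑ i ∈ range (N + 1), |kap i| / B ^ i :=
        Finset.single_le_sum (f := fun i => |kap i| / B ^ i)
          (fun i _ => by positivity) hmem
      have hBn : (0:ℝ) < B ^ n := by positivity
      rw [div_le_iff₀ hBn] at h1
      calc |kap n| ≤ (∑ i ∈ range (N + 1), |kap i| / B ^ i) * B ^ n := h1
        _ ≤ C * B ^ n := by
            apply mul_le_mul_of_nonneg_right _ (le_of_lt hBn)
            rw [hCdef]; linarith
  have hch : ∀ n, |coeff n hh| ≤ (2 + 2 * C) * B ^ n := by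
    intro n
    rcases n with _ | m
    · rw [coeff_hh]
      norm_num
      nlinarith [hC1]
    · rw [coeff_hh]
      simp only [Nat.succ_ne_zero, if_false, Nat.add_sub_cancel]
      have e1 : |2 * kap m + 0 - (if m + 1 = 1 then (1:ℝ) else 0)
          - (if m + 1 = 2 then (1:ℝ) else 0)| ≤ 2 * |kap m| + 2 := by
        have i1 : |(if m + 1 = 1 then (1:ℝ) else 0)| ≤ 1 := by split <;> norm_num
        have i2 : |(if m + 1 = 2 then (1:ℝ) else 0)| ≤ 1 := by split <;> norm_num
        calc |2 * kap m + 0 - (if m + 1 = 1 then (1:ℝ) else 0)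
              - (if m + 1 = 2 then (1:ℝ) else 0)|
            ≤ |2 * kap m + 0 - (if m + 1 = 1 then (1:ℝ) else 0)|
              + |(if m + 1 = 2 then (1:ℝ) else 0)| := abs_sub _ _
          _ ≤ |2 * kap m + 0| + |(if m + 1 = 1 then (1:ℝ) else 0)|
              + |(if m + 1 = 2 then (1:ℝ) else 0)| := by
                have := abs_sub (2 * kap m + 0) (if m + 1 = 1 then (1:ℝ) else 0)
                linarith
          _ ≤ 2 * |kap m| + 2 := by
                rw [add_zero, abs_mul, abs_two]
                linarith
      refine e1.trans ?_
      have h1 : |kap m| ≤ C * B ^ m := hCb m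
      have h2 : B ^ m ≤ B ^ (m + 1) := by
        apply pow_le_pow_right₀ (le_of_lt hB1) (by omega)
      have h3 : (1:ℝ) ≤ B ^ (m + 1) := one_le_pow₀ (le_of_lt hB1)
      nlinarith [hC1]
  -- the evaluation point
  set t : ℝ := (Rs + B⁻¹) / 2 with htdef
  set x₁ : ℝ := -t with hx₁def
  have hβ0 : (0:ℝ) < B⁻¹ := by positivity
  have hRsβ : Rs < B⁻¹ := by
    have h1 : Rs * B < 1 := by
      calc Rs * B < Rs * Agr := mul_lt_mul_of_pos_left hBA Rs_pos
        _ = 1 := Rs_Agr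
    rw [show B⁻¹ = 1 / B from (one_div B).symm, lt_div_iff₀ hB0]
    linarith
  have ht_pos : 0 < t := by rw [htdef]; linarith [Rs_pos]
  have htβ : t < B⁻¹ := by rw [htdef]; linarith
  have habs : |x₁| = t := by rw [hx₁def, abs_neg, abs_of_pos ht_pos]
  have hr1 : B * t < 1 := by
    have := mul_lt_mul_of_pos_left htβ hB0
    rwa [mul_inv_cancel₀ (ne_of_gt hB0)] at this
  have hs : Summable (fun n : ℕ => ‖coeff n hh * x₁ ^ n‖) := by
    refine Summable.of_nonneg_of_le (fun n => norm_nonneg _) ?_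
      ((summable_geometric_of_lt_one (by positivity) hr1).mul_left (2 + 2*C))
    intro n
    rw [Real.norm_eq_abs, abs_mul, abs_pow, habs]
    calc |coeff n hh| * t ^ n ≤ ((2 + 2*C) * B ^ n) * t ^ n :=
          mul_le_mul_of_nonneg_right (hch n) (by positivity)
      _ = (2 + 2*C) * (B*t) ^ n := by rw [mul_pow]; ring
  have hsq := tsum_mul_tsum_eq_tsum_sum_antidiagonal_of_summable_norm hs hs
  have hconv : ∀ n : ℕ, (∑ kl ∈ antidiagonal n,
      (coeff kl.1 hh * x₁ ^ kl.1) * (coeff kl.2 hh * x₁ ^ kl.2))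
      = coeff n (hh ^ 2) * x₁ ^ n := by
    intro n
    rw [sq, PowerSeries.coeff_mul, Finset.sum_mul]
    apply Finset.sum_congr rfl
    intro p hp
    have hpn := Finset.HasAntidiagonal.mem_antidiagonal.mp hp
    rw [← hpn, pow_add]
    ring
  set η : ℝ := ∑' n : ℕ, coeff n hh * x₁ ^ n with hηdef
  have hη2 : η * η = ∑' n : ℕ, coeff n (hh ^ 2) * x₁ ^ n := by
    rw [hηdef, hsq]
    exact tsum_congr hconv
  rw [hh_sq] at hη2
  have hPcoeff : ∀ n : ℕ, coeff n (1 + 2*X - X^2 + 2*X^3 + X^4 : PowerSeries ℝ) =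
      (if n = 0 then 1 else 0) + 2*(if n = 1 then 1 else 0) - (if n = 2 then 1 else 0)
        + 2*(if n = 3 then 1 else 0) + (if n = 4 then 1 else 0) := by
    intro n
    have e1 : (1 + 2*X - X^2 + 2*X^3 + X^4 : PowerSeries ℝ)
        = 1 + (X + X) - X^2 + (X^3 + X^3) + X^4 := by ring
    rw [e1, map_add, map_add, map_sub, map_add, map_add, map_add,
      PowerSeries.coeff_one, PowerSeries.coeff_X, PowerSeries.coeff_X_pow,
      PowerSeries.coeff_X_pow, PowerSeries.coeff_X_pow]
    ring
  have hPsum : (∑' n : ℕ, coeff n (1 + 2*X - X^2 + 2*X^3 + X^4 : PowerSeries ℝ) * x₁ ^ n)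
      = 1 + 2*x₁ - x₁^2 + 2*x₁^3 + x₁^4 := by
    rw [tsum_eq_sum (s := range 5) ?_]
    · simp [Finset.sum_range_succ, hPcoeff]
      ring
    · intro n hn
      have h5 : 5 ≤ n := le_of_not_gt fun h => hn (mem_range.mpr h)
      rw [hPcoeff, if_neg (by omega), if_neg (by omega), if_neg (by omega),
        if_neg (by omega), if_neg (by omega)]
      ring
  have hfac : (1:ℝ) + 2*x₁ - x₁^2 + 2*x₁^3 + x₁^4 = (t^2 - 3*t + 1) * (t^2 + t + 1) := by
    rw [hx₁def]; ring
  have hneg : (t^2 - 3*t + 1) * (t^2 + t + 1) < 0 := by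
    have htR : Rs < t := by rw [htdef]; linarith
    have hRs1 : Rs < 1 := Rs_lt1
    have hβ1 : B⁻¹ < 1 := by
      rw [show B⁻¹ = 1 / B from (one_div B).symm, div_lt_one hB0]; linarith
    have htA : t < Agr := by rw [htdef]; linarith [Agr_gt]
    have h1 : 0 < t - Rs := by linarith
    have h2 : 0 < Agr - t := by linarith
    have h3 : 0 < t^2 + t + 1 := by nlinarith [sq_nonneg (t + 1/2)]
    have h4 : t^2 - 3*t + 1 < 0 := by nlinarith [mul_pos h1 h2, Rs_Agr, Rs_add_Agr]
    exact mul_neg_of_neg_of_pos h4 h3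
  have hfin : η * η < 0 := by rw [hη2, hPsum, hfac]; exact hneg
  nlinarith [mul_self_nonneg η]

lemma limsup_kap :
    limsup (fun n : ℕ => |kap n| ^ ((n:ℝ)⁻¹)) atTop = (3 + Real.sqrt 5) / 2 := by
  have hAgr : (3 + Real.sqrt 5) / 2 = Agr := rfl
  rw [hAgr]
  have hbd : IsBoundedUnder (· ≤ ·) atTop (fun n : ℕ => |kap n| ^ ((n:ℝ)⁻¹)) :=
    ⟨Agr + 1, by
      simpa [Filter.eventually_map] using upper_ev (Agr + 1) (lt_add_one Agr)⟩
  have cob : IsCoboundedUnder (· ≤ ·) atTop (fun n : ℕ => |kap n| ^ ((n:ℝ)⁻¹)) :=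
    isCoboundedUnder_le_of_le atTop (x := 0)
      (fun n => Real.rpow_nonneg (abs_nonneg _) _)
  refine le_antisymm ?_ ?_
  · apply le_of_forall_gt_imp_ge_of_dense
    intro B hB
    exact Filter.limsup_le_of_le cob (upper_ev B hB)
  · by_contra hlt
    push_neg at hlt
    set L := limsup (fun n : ℕ => |kap n| ^ ((n:ℝ)⁻¹)) atTop with hL
    set B := max (3/2 : ℝ) ((L + Agr) / 2) with hBdef
    have hB1 : (1:ℝ) < B := lt_of_lt_of_le (by norm_num) (le_max_left _ _)
    have hBA : B < Agr := max_lt (by linarith [Agr_gt]) (by linarith)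
    have hfr := lower_freq B hB1 hBA
    have hle := Filter.le_limsup_of_frequently_le hfr hbd
    have hB2 : (L + Agr) / 2 ≤ B := le_max_right _ _
    rw [← hL] at hle
    linarith

theorem qGoldenRatio_exists_unique_and_radius :
    (∃! f : PowerSeries ℝ,
      PowerSeries.X * f ^ 2 = (PowerSeries.X ^ 2 + PowerSeries.X - 1) * f + 1) ∧
    ∀ f : PowerSeries ℝ,
      PowerSeries.X * f ^ 2 = (PowerSeries.X ^ 2 + PowerSeries.X - 1) * f + 1 →
        PowerSeries.coeff 0 f = 1 ∧
        Filter.limsup (fun n : ℕ => |PowerSeries.coeff n f| ^ ((n : ℝ)⁻¹))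
          Filter.atTop = (3 + Real.sqrt 5) / 2 := by
  constructor
  · exact ⟨Phi, sol_Phi, fun g hg => sol_unique hg sol_Phi⟩
  · intro f hf
    have hfP : f = Phi := sol_unique hf sol_Phi
    subst hfP
    constructor
    · exact ((sol_iff Phi).mp sol_Phi).1
    · have he : (fun n : ℕ => |PowerSeries.coeff n Phi| ^ ((n:ℝ)⁻¹))
          = fun n : ℕ => |kap n| ^ ((n:ℝ)⁻¹) := by
        funext n; rw [coeff_Phi]
      rw [he]
      exact limsup_kap
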